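/- Let K be a field, V a K-vector space, and n ≥ 1 an integer. Let s_1,…,s_n ∈ V be linearly independent, let m_1,…,m_n ∈ V satisfy m_j = Σ_{k=1}^{j} a_{jk} s_k with a_{jj} = 1 (a_{jk} ∈ K), and let D : V → V be a K-linear map satisfying D m_j = Σ_{k=1}^{j} b_{jk} s_k with b_{jj} = ε_j (b_{jk}, ε_j ∈ K), where ε_j ≠ ε_n for all 1 ≤ j < n. Put d_{jk} = b_{jk} − ε_n·a_{jk} for 1 ≤ k < j ≤ n. Let N be the n×(n−1) matrix with entries N_{j,k} = ε_j − ε_n if k = j, N_{j,k} = d_{j,k} if k < j, and N_{j,k} = 0 if k > j, and for 1 ≤ j ≤ n let N^{(j)} denote the (n−1)×(n−1) matrix obtained from N by deleting its j-th row. Then the vector p := (∏_{j=1}^{n−1}(ε_n − ε_j))^{−1} · Σ_{j=1}^{n} (−1)^{j+1} det(N^{(j)}) · m_j (the cofactor expansion along the first column of the lower Hessenberg determinant whose first column is (m_1,…,m_n) and whose remaining n−1 columns are given by N) satisfies D p = ε_n · p, and the coefficient of m_n in this expression for p equals 1. -/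
import Mathlib

set_option linter.unusedVariables false

theorem my_cofactor_sum_zero {K : Type*} [CommRing K] {n : ℕ}
    (N : Matrix (Fin (n + 1)) (Fin n) K) (k : Fin n) :
    ∑ j : Fin (n + 1),
      (-1 : K) ^ (j : ℕ) * (N.submatrix j.succAbove id).det * N j k = 0 := by
  set M : Matrix (Fin (n + 1)) (Fin (n + 1)) K :=
    Matrix.of fun j i => Fin.cases (N j k) (N j) i with hM
  have h0 : M.det = 0 := by
    refine Matrix.det_zero_of_column_eq (i := 0) (j := k.succ)
      (Fin.succ_ne_zero k).symm fun r => ?_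
    simp [hM]
  rw [Matrix.det_succ_column_zero] at h0
  rw [← h0]
  refine Finset.sum_congr rfl fun j _ => ?_
  have hsub : M.submatrix j.succAbove Fin.succ = N.submatrix j.succAbove id := by
    ext r c; simp [hM]
  rw [hsub]
  simp [hM]
  ring


/-- **Determinantal diagonalization of a regular triangular operator.**
`n+1` plays the role of the `n ≥ 1` of the informal statement; indices are
`0`-based, so the last index `Fin.last n` corresponds to the index `n` of the
informal statement, and the `(n-1)`-column matrix `N` has columns indexed by
`Fin n` (column `k : Fin n` corresponding to the informal column `k+1`, i.e. to
the index `Fin.castSucc k`). -/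
theorem determinantal_formula_eigenvector
    {K V : Type*} [Field K] [AddCommGroup V] [Module K V]
    (n : ℕ) (s m : Fin (n + 1) → V) (a b : Fin (n + 1) → Fin (n + 1) → K)
    (ε : Fin (n + 1) → K) (D : V →ₗ[K] V)
    (hs : LinearIndependent K s)
    (hm : ∀ j, m j = ∑ k ∈ Finset.Iic j, a j k • s k)
    (ha : ∀ j, a j j = 1)
    (hD : ∀ j, D (m j) = ∑ k ∈ Finset.Iic j, b j k • s k)
    (hb : ∀ j, b j j = ε j)
    (hreg : ∀ j : Fin (n + 1), j ≠ Fin.last n → ε j ≠ ε (Fin.last n))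
    (N : Matrix (Fin (n + 1)) (Fin n) K)
    (hN : ∀ (j : Fin (n + 1)) (k : Fin n),
      N j k =
        if (k : ℕ) = (j : ℕ) then ε j - ε (Fin.last n)
        else if (k : ℕ) < (j : ℕ) then
          b j (Fin.castSucc k) - ε (Fin.last n) * a j (Fin.castSucc k)
        else 0)
    (p : V)
    (hp : p = (∏ j : Fin n, (ε (Fin.last n) - ε (Fin.castSucc j)))⁻¹ •
        ∑ j : Fin (n + 1),
          ((-1 : K) ^ (j : ℕ) * (N.submatrix j.succAbove id).det) • m j) :
    D p = ε (Fin.last n) • p ∧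
      (∏ j : Fin n, (ε (Fin.last n) - ε (Fin.castSucc j)))⁻¹ *
        ((-1 : K) ^ n * (N.submatrix (Fin.last n).succAbove id).det) = 1 := by
  set εl := ε (Fin.last n) with hεl
  set c := ∏ j : Fin n, (εl - ε (Fin.castSucc j)) with hc_def
  have hc : c ≠ 0 := by
    refine Finset.prod_ne_zero_iff.mpr fun j _ => sub_ne_zero.mpr ?_
    exact (hreg _ (Fin.castSucc_lt_last j).ne).symm
  -- part 2
  have hdet : (N.submatrix (Fin.last n).succAbove id).det =
      ∏ j : Fin n, (ε (Fin.castSucc j) - εl) := by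
    rw [Fin.succAbove_last]
    rw [Matrix.det_of_lowerTriangular _ ?_]
    · refine Finset.prod_congr rfl fun i _ => ?_
      simp [hN]
    · intro i j hij
      simp only [OrderDual.toDual_lt_toDual] at hij
      have : ¬ ((j : ℕ) = (i : ℕ)) ∧ ¬ ((j : ℕ) < (i : ℕ)) := by
        constructor <;> omega
      simp [Matrix.submatrix_apply, hN, this.1, this.2]
  have hprod : ∏ j : Fin n, (ε (Fin.castSucc j) - εl) = (-1 : K) ^ n * c := by
    calc ∏ j : Fin n, (ε (Fin.castSucc j) - εl)
        = ∏ j : Fin n, ((-1) * (εl - ε (Fin.castSucc j))) :=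
          Finset.prod_congr rfl fun j _ => by ring
      _ = (-1 : K) ^ n * c := by
          rw [Finset.prod_mul_distrib, Finset.prod_const, Finset.card_univ, Fintype.card_fin]
  have part2 : c⁻¹ * ((-1 : K) ^ n * (N.submatrix (Fin.last n).succAbove id).det) = 1 := by
    rw [hdet, hprod, ← mul_assoc ((-1 : K) ^ n), ← pow_add]
    rw [Even.neg_one_pow ⟨n, rfl⟩, one_mul]
    exact inv_mul_cancel₀ hc
  refine ⟨?_, part2⟩
  -- part 1
  set co : Fin (n + 1) → K :=
    fun j => (-1 : K) ^ (j : ℕ) * (N.submatrix j.succAbove id).det with hco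
  have key : ∀ j, D (m j) - εl • m j = ∑ k : Fin n, N j k • s (Fin.castSucc k) := by
    intro j
    set g : Fin (n + 1) → K := fun k => if k ≤ j then b j k - εl * a j k else 0 with hg
    have e1 : D (m j) - εl • m j = ∑ k : Fin (n + 1), g k • s k := by
      rw [hD, hm, Finset.smul_sum, ← Finset.sum_sub_distrib]
      rw [← Finset.sum_subset (Finset.subset_univ (Finset.Iic j))
        (fun k _ hk => by
          have : ¬ k ≤ j := by simpa using hk
          simp [hg, this])]
      refine Finset.sum_congr rfl fun k hk => ?_
      have hkj : k ≤ j := Finset.mem_Iic.mp hk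
      simp [hg, hkj, sub_smul, smul_smul]
    rw [e1, Fin.sum_univ_castSucc]
    have hlastzero : g (Fin.last n) = 0 := by
      by_cases hj : Fin.last n ≤ j
      · have : j = Fin.last n := le_antisymm (Fin.le_last j) hj
        subst this
        simp [hg, hb, ha, hεl]
      · simp [hg, hj]
    rw [hlastzero, zero_smul, add_zero]
    refine Finset.sum_congr rfl fun k _ => ?_
    congr 1
    rw [hN]
    by_cases h1 : (k : ℕ) = (j : ℕ)
    · have hkj : Fin.castSucc k = j := Fin.ext h1
      subst hkj
      simp [hg, hb, ha]
    · by_cases h2 : (k : ℕ) < (j : ℕ)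
      · have hkj : Fin.castSucc k ≤ j := by
          rw [Fin.le_def]; simpa using h2.le
        simp [hg, h1, h2, hkj]
      · have hkj : ¬ Fin.castSucc k ≤ j := by
          rw [Fin.le_def]; simp; omega
        simp [hg, h1, h2, hkj]
  have main : ∑ j : Fin (n + 1), co j • (D (m j) - εl • m j) = 0 := by
    calc ∑ j : Fin (n + 1), co j • (D (m j) - εl • m j)
        = ∑ j : Fin (n + 1), ∑ k : Fin n, (co j * N j k) • s (Fin.castSucc k) := by
          refine Finset.sum_congr rfl fun j _ => ?_
          rw [key j, Finset.smul_sum]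
          exact Finset.sum_congr rfl fun k _ => by rw [smul_smul]
      _ = ∑ k : Fin n, (∑ j : Fin (n + 1), co j * N j k) • s (Fin.castSucc k) := by
          rw [Finset.sum_comm]
          exact Finset.sum_congr rfl fun k _ => (Finset.sum_smul).symm
      _ = 0 := by
          refine Finset.sum_eq_zero fun k _ => ?_
          rw [show ∑ j : Fin (n + 1), co j * N j k = 0 from my_cofactor_sum_zero N k,
            zero_smul]
  have hfin : D p - εl • p = 0 := by
    rw [hp, map_smul, map_sum, smul_comm εl c⁻¹, ← smul_sub, Finset.smul_sum,
      ← Finset.sum_sub_distrib]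
    show c⁻¹ • ∑ j : Fin (n + 1), (D (co j • m j) - εl • co j • m j) = 0
    have step : ∑ j : Fin (n + 1), (D (co j • m j) - εl • co j • m j)
        = ∑ j : Fin (n + 1), co j • (D (m j) - εl • m j) :=
      Finset.sum_congr rfl fun j _ => by rw [map_smul, smul_sub, smul_comm εl]
    rw [step, main, smul_zero]
  exact sub_eq_zero.mp hfin
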